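/- arXiv:2303.08094 — 2 statements merged into one kernel-verified Lean document; each statement's English description precedes it below -/
import Mathlib

section
/- Fix d ≥ 2. For all but at most countably many σ ∈ ℝ, the following holds: for every pair of distinct m₁, m₂ ∈ ℕ₀, setting ν_i = m_i + d/2 − 1, the equations z J'_{ν₁}(z)/J_{ν₁}(z) = d/2 − 1 − σ and z J'_{ν₂}(z)/J_{ν₂}(z) = d/2 − 1 − σ have no common positive root z. -/
open Real Filter Topology


/-- The Bessel function of the first kind of (real) order `ν`,
`J_ν(z) = Σ_{k≥0} (-1)^k (z/2)^{2k+ν} / (k! Γ(k+ν+1))`. -/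
noncomputable def besselJ (ν : ℝ) (z : ℝ) : ℝ :=
  ∑' k : ℕ, ((-1 : ℝ) ^ k / (Nat.factorial k * Real.Gamma (k + ν + 1))) *
    (z / 2) ^ (2 * (k : ℝ) + ν)

noncomputable def bCoef (ν : ℝ) (k : ℕ) : ℝ :=
  (-1 : ℝ) ^ k / (Nat.factorial k * Real.Gamma (k + ν + 1))

noncomputable def besselG (ν : ℝ) (t : ℝ) : ℝ := ∑' k : ℕ, bCoef ν k * t ^ k

lemma gamma_arg_pos {ν : ℝ} (hν : 0 ≤ ν) (k : ℕ) : 0 < (k : ℝ) + ν + 1 := by positivity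

lemma gamma_pos {ν : ℝ} (hν : 0 ≤ ν) (k : ℕ) : 0 < Real.Gamma ((k : ℝ) + ν + 1) :=
  Real.Gamma_pos_of_pos (gamma_arg_pos hν k)

lemma gamma_ge {ν : ℝ} (hν : 0 ≤ ν) (k : ℕ) :
    Real.Gamma (ν + 1) * (Nat.factorial k : ℝ) ≤ Real.Gamma ((k : ℝ) + ν + 1) := by
  induction k with
  | zero => simp
  | succ k ih =>
    have h1 : ((k + 1 : ℕ) : ℝ) + ν + 1 = ((k : ℝ) + ν + 1) + 1 := by push_cast; ring
    rw [h1, Real.Gamma_add_one (gamma_arg_pos hν k).ne']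
    have hk1 : ((k : ℝ) + 1) ≤ (k : ℝ) + ν + 1 := by linarith
    calc Real.Gamma (ν + 1) * ((k + 1).factorial : ℝ)
        = ((k : ℝ) + 1) * (Real.Gamma (ν + 1) * (k.factorial : ℝ)) := by
          push_cast [Nat.factorial_succ]; ring
      _ ≤ ((k : ℝ) + ν + 1) * Real.Gamma ((k : ℝ) + ν + 1) := by
          apply mul_le_mul hk1 ih (by positivity) (by positivity)

lemma bCoef_abs_le {ν : ℝ} (hν : 0 ≤ ν) (k : ℕ) :
    |bCoef ν k| ≤ (Real.Gamma (ν + 1))⁻¹ / (Nat.factorial k : ℝ) := by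
  have hg := gamma_pos hν k
  have hgn : (0:ℝ) < Real.Gamma (ν + 1) := Real.Gamma_pos_of_pos (by linarith)
  have hf : (0:ℝ) < (Nat.factorial k : ℝ) := by positivity
  rw [bCoef, abs_div, abs_pow, abs_neg, abs_one, one_pow, abs_of_pos (by positivity)]
  rw [div_le_div_iff₀ (by positivity) hf, one_mul]
  have h1 : (1:ℝ) ≤ (Nat.factorial k : ℝ) := by
    exact_mod_cast Nat.one_le_iff_ne_zero.mpr (Nat.factorial_ne_zero k)
  have h2 := gamma_ge hν k
  rw [inv_mul_eq_div, le_div_iff₀ hgn]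
  nlinarith

lemma besselG_summable {ν : ℝ} (hν : 0 ≤ ν) (t : ℝ) :
    Summable (fun k : ℕ => bCoef ν k * t ^ k) := by
  apply Summable.of_norm_bounded (g := fun k => (Real.Gamma (ν + 1))⁻¹ * (|t| ^ k / (Nat.factorial k : ℝ)))
  · exact (Real.summable_pow_div_factorial |t|).mul_left _
  · intro k
    rw [norm_mul, norm_pow, Real.norm_eq_abs, Real.norm_eq_abs]
    calc |bCoef ν k| * |t| ^ k ≤ ((Real.Gamma (ν + 1))⁻¹ / (Nat.factorial k : ℝ)) * |t| ^ k := by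
          apply mul_le_mul_of_nonneg_right (bCoef_abs_le hν k) (by positivity)
      _ = (Real.Gamma (ν + 1))⁻¹ * (|t| ^ k / (Nat.factorial k : ℝ)) := by ring

lemma bCoef_succ {ν : ℝ} (hν : 0 ≤ ν) (k : ℕ) :
    ((k : ℝ) + 1) * bCoef ν (k + 1) = -bCoef (ν + 1) k := by
  have h1 : ((k + 1 : ℕ) : ℝ) + ν + 1 = (k : ℝ) + (ν + 1) + 1 := by push_cast; ring
  have hg : Real.Gamma ((k : ℝ) + (ν + 1) + 1) ≠ 0 := by
    have := gamma_pos (by linarith : (0:ℝ) ≤ ν + 1) k; linarith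
  have hf : ((k + 1).factorial : ℝ) ≠ 0 := by positivity
  have hf2 : ((k).factorial : ℝ) ≠ 0 := by positivity
  rw [bCoef, bCoef, h1]
  rw [pow_succ]
  have hfs : (((k+1).factorial : ℕ) : ℝ) = ((k:ℝ)+1) * (k.factorial : ℝ) := by
    rw [Nat.factorial_succ]; push_cast; ring
  field_simp [hfs]
  rw [hfs]

lemma besselG_hasDerivAt {ν : ℝ} (hν : 0 ≤ ν) (t : ℝ) :
    HasDerivAt (besselG ν) (-besselG (ν + 1) t) t := by
  set R : ℝ := |t| + 1 with hR
  have hR1 : (1:ℝ) ≤ R := by rw [hR]; linarith [abs_nonneg t]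
  have hR0 : (0:ℝ) < R := by linarith
  set u : ℕ → ℝ := fun k => (Real.Gamma (ν + 1))⁻¹ * ((k : ℝ) * R ^ (k - 1) / (Nat.factorial k : ℝ)) with hu
  have hus : Summable u := by
    rw [← summable_nat_add_iff 1]
    apply Summable.congr ((Real.summable_pow_div_factorial R).mul_left (Real.Gamma (ν + 1))⁻¹)
    intro k
    have : (((k+1).factorial : ℕ) : ℝ) = ((k:ℝ)+1) * (k.factorial : ℝ) := by
      rw [Nat.factorial_succ]; push_cast; ring
    simp only [hu, Nat.add_sub_cancel, this]
    have hk1 : ((k:ℝ)+1) ≠ 0 := by positivity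
    have hkf : ((k.factorial : ℕ):ℝ) ≠ 0 := by positivity
    push_cast
    field_simp
  have hderiv : ∀ (k : ℕ) (y : ℝ), HasDerivAt (fun y : ℝ => bCoef ν k * y ^ k)
      (bCoef ν k * ((k : ℝ) * y ^ (k - 1))) y := fun k y => (hasDerivAt_pow k y).const_mul _
  have hbound : ∀ (k : ℕ) (y : ℝ), y ∈ Set.Ioo (-R) R →
      ‖bCoef ν k * ((k : ℝ) * y ^ (k - 1))‖ ≤ u k := by
    intro k y hy
    have hyR : |y| ≤ R := by
      rw [abs_le]; exact ⟨hy.1.le, hy.2.le⟩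
    rw [norm_mul, norm_mul, Real.norm_eq_abs, Real.norm_eq_abs, Real.norm_eq_abs,
      Nat.abs_cast, abs_pow]
    calc |bCoef ν k| * ((k:ℝ) * |y| ^ (k-1))
        ≤ ((Real.Gamma (ν + 1))⁻¹ / (Nat.factorial k : ℝ)) * ((k:ℝ) * R ^ (k-1)) := by
          apply mul_le_mul (bCoef_abs_le hν k) _ (by positivity) (by positivity)
          exact mul_le_mul_of_nonneg_left (pow_le_pow_left₀ (abs_nonneg y) hyR _) (by positivity)
      _ = u k := by rw [hu]; ring
  have hsum0 : Summable (fun k : ℕ => bCoef ν k * t ^ k) := besselG_summable hν t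
  have key : HasDerivAt (fun y => ∑' k : ℕ, bCoef ν k * y ^ k)
      (∑' k : ℕ, bCoef ν k * ((k : ℝ) * t ^ (k - 1))) t := by
    have htmem : t ∈ Set.Ioo (-R) R :=
      Set.mem_Ioo.mpr ⟨by rw [hR]; linarith [neg_abs_le t], by rw [hR]; linarith [le_abs_self t]⟩
    exact hasDerivAt_tsum_of_isPreconnected hus isOpen_Ioo
      (convex_Ioo _ _).isPreconnected (fun k y _ => hderiv k y) hbound htmem hsum0 htmem
  have htmem : t ∈ Set.Ioo (-R) R :=
    Set.mem_Ioo.mpr ⟨by rw [hR]; linarith [neg_abs_le t], by rw [hR]; linarith [le_abs_self t]⟩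
  have hfs : Summable (fun k : ℕ => bCoef ν k * ((k : ℝ) * t ^ (k - 1))) :=
    Summable.of_norm_bounded hus (fun k => hbound k t htmem)
  have heq : (∑' k : ℕ, bCoef ν k * ((k : ℝ) * t ^ (k - 1))) = -besselG (ν + 1) t := by
    rw [Summable.tsum_eq_zero_add hfs]
    simp only [Nat.cast_zero, zero_mul, mul_zero, zero_add]
    rw [besselG, ← tsum_neg]
    apply tsum_congr
    intro k
    have h2 : bCoef ν (k+1) * (((k+1:ℕ) : ℝ) * t ^ (k + 1 - 1)) = (((k:ℝ)+1) * bCoef ν (k+1)) * t ^ k := by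
      push_cast; ring
    rw [h2, bCoef_succ hν k]
    ring
  rw [← heq]
  exact key

lemma bCoef_rec {ν : ℝ} (hν : 0 ≤ ν) (k : ℕ) :
    (ν + 1) * bCoef (ν + 1) (k + 1) - bCoef ν (k + 1) = bCoef (ν + 2) k := by
  have hg : (0:ℝ) < Real.Gamma ((k:ℝ) + ν + 2) := by
    have := Real.Gamma_pos_of_pos (show (0:ℝ) < (k:ℝ) + ν + 2 by positivity); exact this
  have e1 : ((k + 1 : ℕ) : ℝ) + (ν + 1) + 1 = ((k:ℝ) + ν + 2) + 1 := by push_cast; ring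
  have e2 : ((k + 1 : ℕ) : ℝ) + ν + 1 = (k:ℝ) + ν + 2 := by push_cast; ring
  have e3 : ((k : ℕ) : ℝ) + (ν + 2) + 1 = ((k:ℝ) + ν + 2) + 1 := by push_cast; ring
  rw [bCoef, bCoef, bCoef, e1, e2, e3, Real.Gamma_add_one (by positivity)]
  have hf : (((k+1).factorial : ℕ) : ℝ) = ((k:ℝ)+1) * (k.factorial : ℝ) := by
    rw [Nat.factorial_succ]; push_cast; ring
  have hk1 : ((k:ℝ) + 1) ≠ 0 := by positivity
  have hkf : ((k.factorial : ℕ) : ℝ) ≠ 0 := by positivity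
  rw [hf, pow_succ]
  field_simp
  ring

lemma besselG_rec {ν : ℝ} (hν : 0 ≤ ν) (t : ℝ) :
    (ν + 1) * besselG (ν + 1) t - besselG ν t = t * besselG (ν + 2) t := by
  have h1 : Summable (fun k : ℕ => bCoef (ν+1) k * t ^ k) := besselG_summable (by linarith) t
  have h2 : Summable (fun k : ℕ => bCoef ν k * t ^ k) := besselG_summable hν t
  have hL : Summable (fun k : ℕ => ((ν+1) * bCoef (ν+1) k - bCoef ν k) * t ^ k) := by
    apply Summable.congr ((h1.mul_left (ν+1)).sub h2)
    intro k; ring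
  have key : (∑' k : ℕ, ((ν+1) * bCoef (ν+1) k - bCoef ν k) * t ^ k)
      = t * besselG (ν + 2) t := by
    rw [Summable.tsum_eq_zero_add hL]
    have hz0 : ((ν+1) * bCoef (ν+1) 0 - bCoef ν 0) * t ^ 0 = 0 := by
      have hne : (ν + 1 : ℝ) ≠ 0 := by positivity
      simp only [bCoef, pow_zero, Nat.factorial_zero, Nat.cast_zero, Nat.cast_one, one_mul, mul_one]
      rw [show (0:ℝ) + (ν+1) + 1 = (ν+1) + 1 by ring, show (0:ℝ) + ν + 1 = ν + 1 by ring,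
        Real.Gamma_add_one hne]
      field_simp
      ring
    rw [hz0, zero_add, besselG, ← tsum_mul_left]
    apply tsum_congr
    intro k
    rw [← bCoef_rec hν k]
    ring
  rw [← key, besselG, besselG, ← tsum_mul_left, ← Summable.tsum_sub (h1.mul_left _) h2]
  apply tsum_congr
  intro k; ring

lemma besselJ_eq_G {ν : ℝ} {z : ℝ} (hz : 0 < z) :
    besselJ ν z = (z/2) ^ ν * besselG ν ((z/2)^2) := by
  have hz2 : (0:ℝ) < z/2 := by linarith
  rw [besselJ, besselG, ← tsum_mul_left]
  apply tsum_congr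
  intro k
  have h1 : (z/2) ^ (2 * (k:ℝ) + ν) = (z/2) ^ ν * ((z/2)^2) ^ k := by
    rw [Real.rpow_add hz2]
    have : (2 * (k:ℝ)) = ((2 * k : ℕ) : ℝ) := by push_cast; ring
    rw [this, Real.rpow_natCast, pow_mul, mul_comm]
  rw [h1, bCoef]
  ring

lemma besselJ_hasDerivAt {ν : ℝ} (hν : 0 ≤ ν) {z : ℝ} (hz : 0 < z) :
    HasDerivAt (besselJ ν) ((ν * besselJ ν z - z * besselJ (ν+1) z) / z) z := by
  have hz2 : (0:ℝ) < z/2 := by linarith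
  have hf1 : HasDerivAt (fun y : ℝ => (y/2) ^ ν) (ν * (z/2) ^ (ν - 1) * (1/2)) z := by
    have := (Real.hasDerivAt_rpow_const (x := z/2) (p := ν) (Or.inl hz2.ne'))
    exact this.comp z ((hasDerivAt_id z).div_const 2)
  have hinner : HasDerivAt (fun y : ℝ => (y/2)^2) (2 * (z/2) * (1/2)) z := by
    have h := ((hasDerivAt_id z).div_const 2).fun_pow 2
    simpa using h
  have hf2 : HasDerivAt (fun y : ℝ => besselG ν ((y/2)^2))
      (-besselG (ν+1) ((z/2)^2) * (2 * (z/2) * (1/2))) z :=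
    by have := (besselG_hasDerivAt hν ((z/2)^2)).comp z hinner; exact this
  have hprod := hf1.mul hf2
  have hcongr : besselJ ν =ᶠ[nhds z] fun y => (y/2) ^ ν * besselG ν ((y/2)^2) := by
    filter_upwards [Ioi_mem_nhds hz] with y hy
    exact besselJ_eq_G hy
  have hJ : HasDerivAt (besselJ ν)
      (ν * (z/2) ^ (ν - 1) * (1/2) * besselG ν ((z/2)^2) +
        (z/2) ^ ν * (-besselG (ν+1) ((z/2)^2) * (2 * (z/2) * (1/2)))) z :=
    hprod.congr_of_eventuallyEq hcongr
  convert hJ using 1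
  rw [besselJ_eq_G hz, besselJ_eq_G hz (ν := ν + 1)]
  rw [show (ν - 1) = ν + (-1) by ring, show (ν + 1) = ν + 1 by ring,
    Real.rpow_add hz2, Real.rpow_add hz2, Real.rpow_one, Real.rpow_neg_one]
  have hzne : z ≠ 0 := hz.ne'
  field_simp
  ring

lemma besselJ_deriv_eq {ν : ℝ} (hν : 0 ≤ ν) {z : ℝ} (hz : 0 < z) :
    z * deriv (besselJ ν) z = ν * besselJ ν z - z * besselJ (ν+1) z := by
  rw [(besselJ_hasDerivAt hν hz).deriv]
  field_simp

lemma besselJ_rec {ν : ℝ} (hν : 0 ≤ ν) {z : ℝ} (hz : 0 < z) :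
    z * besselJ ν z = 2*(ν+1) * besselJ (ν+1) z - z * besselJ (ν+2) z := by
  have hz2 : (0:ℝ) < z/2 := by linarith
  have hP1 : (z/2) ^ (ν+1) = (z/2) ^ ν * (z/2) := by
    rw [Real.rpow_add hz2, Real.rpow_one]
  have hP2 : (z/2) ^ (ν+2) = (z/2) ^ ν * (z/2)^2 := by
    rw [Real.rpow_add hz2, show ((2:ℝ) : ℝ) = ((2:ℕ):ℝ) by norm_num, Real.rpow_natCast]
  rw [besselJ_eq_G hz, besselJ_eq_G hz (ν := ν+1), besselJ_eq_G hz (ν := ν+2), hP1, hP2]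
  linear_combination (-(z*(z/2)^ν : ℝ)) * besselG_rec hν ((z/2)^2)

noncomputable def besselW (ν₁ ν₂ : ℝ) (z : ℝ) : ℝ :=
  (ν₁ - ν₂) * (besselJ ν₁ z * besselJ ν₂ z) +
    z * (besselJ (ν₂+1) z * besselJ ν₁ z - besselJ (ν₁+1) z * besselJ ν₂ z)

lemma besselW_eq {ν₁ ν₂ : ℝ} (h₁ : 0 ≤ ν₁) (h₂ : 0 ≤ ν₂) {z : ℝ} (hz : 0 < z) :
    besselW ν₁ ν₂ z = z * deriv (besselJ ν₁) z * besselJ ν₂ z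
      - z * deriv (besselJ ν₂) z * besselJ ν₁ z := by
  rw [besselW]
  linear_combination (besselJ ν₁ z) * besselJ_deriv_eq h₂ hz
    - (besselJ ν₂ z) * besselJ_deriv_eq h₁ hz

lemma besselW_isolated {ν₁ ν₂ : ℝ} (h₁ : 0 ≤ ν₁) (h₂ : 0 ≤ ν₂) (hne : ν₁^2 ≠ ν₂^2)
    {z₀ : ℝ} (hz : 0 < z₀) (hA : besselJ ν₁ z₀ ≠ 0) (hB : besselJ ν₂ z₀ ≠ 0)
    (hW0 : besselW ν₁ ν₂ z₀ = 0) :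
    ∀ᶠ z in nhdsWithin z₀ {z₀}ᶜ, besselW ν₁ ν₂ z ≠ 0 := by
  have hzne : z₀ ≠ 0 := hz.ne'
  set JA := besselJ ν₁ z₀ with hAdef
  set JB := besselJ ν₂ z₀ with hBdef
  set JAp := besselJ (ν₁+1) z₀ with hApdef
  set JBp := besselJ (ν₂+1) z₀ with hBpdef
  have hd₁ : HasDerivAt (besselJ ν₁) ((ν₁ * JA - z₀ * JAp)/z₀) z₀ := besselJ_hasDerivAt h₁ hz
  have hd₂ : HasDerivAt (besselJ ν₂) ((ν₂ * JB - z₀ * JBp)/z₀) z₀ := besselJ_hasDerivAt h₂ hz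
  have hd₁p : HasDerivAt (besselJ (ν₁+1)) ((z₀ * JA - (ν₁+1) * JAp)/z₀) z₀ := by
    have h := besselJ_hasDerivAt (by linarith : (0:ℝ) ≤ ν₁+1) hz
    convert h using 1
    have hrec := besselJ_rec h₁ hz
    rw [div_eq_div_iff hzne hzne]
    rw [show ν₁ + 1 + 1 = ν₁ + 2 by ring] at h ⊢
    nlinarith [hrec]
  have hd₂p : HasDerivAt (besselJ (ν₂+1)) ((z₀ * JB - (ν₂+1) * JBp)/z₀) z₀ := by
    have h := besselJ_hasDerivAt (by linarith : (0:ℝ) ≤ ν₂+1) hz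
    convert h using 1
    have hrec := besselJ_rec h₂ hz
    rw [div_eq_div_iff hzne hzne]
    rw [show ν₂ + 1 + 1 = ν₂ + 2 by ring] at h ⊢
    nlinarith [hrec]
  have hWd : HasDerivAt (besselW ν₁ ν₂)
      ((ν₁-ν₂) * (((ν₁ * JA - z₀ * JAp)/z₀) * JB + JA * ((ν₂ * JB - z₀ * JBp)/z₀)) +
        (1 * (JBp * JA - JAp * JB) +
          z₀ * ((((z₀ * JB - (ν₂+1) * JBp)/z₀) * JA + JBp * ((ν₁ * JA - z₀ * JAp)/z₀)) -
            (((z₀ * JA - (ν₁+1) * JAp)/z₀) * JB + JAp * ((ν₂ * JB - z₀ * JBp)/z₀))))) z₀ := by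
    exact (((hd₁.mul hd₂).const_mul (ν₁-ν₂)).add
      ((hasDerivAt_id z₀).mul ((hd₂p.mul hd₁).sub (hd₁p.mul hd₂))))
  set E := (ν₁-ν₂) * (((ν₁ * JA - z₀ * JAp)/z₀) * JB + JA * ((ν₂ * JB - z₀ * JBp)/z₀)) +
        (1 * (JBp * JA - JAp * JB) +
          z₀ * ((((z₀ * JB - (ν₂+1) * JBp)/z₀) * JA + JBp * ((ν₁ * JA - z₀ * JAp)/z₀)) -
            (((z₀ * JA - (ν₁+1) * JAp)/z₀) * JB + JAp * ((ν₂ * JB - z₀ * JBp)/z₀)))) with hE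
  have hEval : E = (ν₁^2 - ν₂^2) * JA * JB / z₀ := by
    rw [hE]; field_simp; ring
  have hEne : E ≠ 0 := by
    rw [hEval]
    exact div_ne_zero (mul_ne_zero (mul_ne_zero (sub_ne_zero.mpr hne) hA) hB) hzne
  rw [hasDerivAt_iff_tendsto_slope] at hWd
  have := hWd.eventually (eventually_ne_nhds hEne)
  filter_upwards [this, self_mem_nhdsWithin] with z hslope hzmem
  intro hcontra
  apply hslope
  rw [slope_def_field, hcontra, hW0]
  simp

lemma countable_of_isolated {s : Set ℝ} (h : ∀ x ∈ s, ∀ᶠ z in nhdsWithin x {x}ᶜ, z ∉ s) :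
    s.Countable := by
  have hdisc : DiscreteTopology s := by
    rw [discreteTopology_subtype_iff]
    intro x hx
    rw [Filter.inf_principal_eq_bot]
    exact (h x hx).mono fun z hz => hz
  rw [← Set.countable_coe_iff]
  exact (TopologicalSpace.separableSpace_iff_countable).mp inferInstance

/-- `z` is a positive root of the equation `z J'_ν(z)/J_ν(z) = c`, i.e. `z > 0`,
`J_ν(z) ≠ 0` and `z J'_ν(z) = c J_ν(z)`. -/
def IsPosRobinBesselRoot (ν c z : ℝ) : Prop :=
  0 < z ∧ besselJ ν z ≠ 0 ∧ z * deriv (besselJ ν) z = c * besselJ ν z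

/-- Fix `d ≥ 2`.  For all but at most countably many `σ ∈ ℝ`:
for every pair of distinct `m₁, m₂ ∈ ℕ₀` (with `ν_i = m_i + d/2 - 1`), the equations
`z J'_{ν₁}(z)/J_{ν₁}(z) = d/2 - 1 - σ` and `z J'_{ν₂}(z)/J_{ν₂}(z) = d/2 - 1 - σ`
have no common positive root. -/
theorem generic_sigma_no_common_root (d : ℕ) (hd : 2 ≤ d) :
    {σ : ℝ | ¬ ∀ m₁ m₂ : ℕ, m₁ ≠ m₂ →
        ¬ ∃ z : ℝ,
            IsPosRobinBesselRoot ((m₁ : ℝ) + d / 2 - 1) ((d : ℝ) / 2 - 1 - σ) z ∧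
            IsPosRobinBesselRoot ((m₂ : ℝ) + d / 2 - 1) ((d : ℝ) / 2 - 1 - σ) z}.Countable := by
  set ν : ℕ → ℝ := fun m => (m : ℝ) + d / 2 - 1 with hνdef
  have hd2 : (1:ℝ) ≤ (d:ℝ)/2 := by
    have : (2:ℝ) ≤ (d:ℝ) := by exact_mod_cast hd
    linarith
  have hν0 : ∀ m : ℕ, 0 ≤ ν m := by
    intro m; simp only [hνdef]; have : (0:ℝ) ≤ (m:ℝ) := Nat.cast_nonneg m; linarith
  -- the common-root sets
  set Z : ℕ → ℕ → Set ℝ := fun m₁ m₂ =>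
    {z : ℝ | 0 < z ∧ besselJ (ν m₁) z ≠ 0 ∧ besselJ (ν m₂) z ≠ 0 ∧
      besselW (ν m₁) (ν m₂) z = 0} with hZdef
  have hZcount : ∀ m₁ m₂ : ℕ, m₁ ≠ m₂ → (Z m₁ m₂).Countable := by
    intro m₁ m₂ hm
    apply countable_of_isolated
    rintro x ⟨hx, hA, hB, hW⟩
    have hne : (ν m₁)^2 ≠ (ν m₂)^2 := by
      intro h
      apply hm
      have heq : ν m₁ = ν m₂ := by
        nlinarith [hν0 m₁, hν0 m₂, sq_nonneg (ν m₁ - ν m₂), sq_nonneg (ν m₁ + ν m₂)]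
      have : (m₁ : ℝ) = (m₂ : ℝ) := by simp only [hνdef] at heq; linarith
      exact_mod_cast this
    filter_upwards [besselW_isolated (hν0 m₁) (hν0 m₂) hne hx hA hB hW] with z hz
    intro hmem
    exact hz hmem.2.2.2
  -- bad σ are in the image of Z under an explicit map
  apply Set.Countable.mono ?_ (Set.countable_iUnion (fun m₁ : ℕ => Set.countable_iUnion (fun m₂ : ℕ =>
    show ((fun z => (d:ℝ)/2 - 1 - z * deriv (besselJ (ν m₁)) z / besselJ (ν m₁) z) ''
        (if m₁ = m₂ then (∅ : Set ℝ) else Z m₁ m₂)).Countable by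
      split_ifs with h
      · simp
      · exact (hZcount m₁ m₂ h).image _)))
  intro σ hσ
  simp only [Set.mem_setOf_eq] at hσ
  push_neg at hσ
  obtain ⟨m₁, m₂, hm, z, ⟨hz, hA, hroot₁⟩, ⟨_, hB, hroot₂⟩⟩ := hσ
  refine Set.mem_iUnion.mpr ⟨m₁, Set.mem_iUnion.mpr ⟨m₂, ?_⟩⟩
  rw [if_neg hm]
  refine ⟨z, ⟨hz, hA, hB, ?_⟩, ?_⟩
  · rw [besselW_eq (hν0 m₁) (hν0 m₂) hz]
    rw [hroot₁, hroot₂]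
    ring
  · have hc : z * deriv (besselJ (ν m₁)) z / besselJ (ν m₁) z = (d:ℝ)/2 - 1 - σ := by
      rw [div_eq_iff hA]; exact hroot₁
    show (d:ℝ)/2 - 1 - z * deriv (besselJ (ν m₁)) z / besselJ (ν m₁) z = σ
    rw [hc]; ring
end

section
/- Let (ν_i, k_i) be a sequence with ν_i ≥ 0 and k_i ∈ ℕ such that j_{ν_i, k_i} → ∞ as i → ∞. Then j_{ν_i, k_i + 1} / j_{ν_i, k_i} → 1 as i → ∞. -/
open Filter

/-- `besselJZero ν k` is the `k`-th positive zero `j_{ν,k}` of `J_ν` (for `k ≥ 1`;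
the value at `k = 0` is a sentinel equal to `0`). -/
noncomputable def besselJZero (ν : ℝ) : ℕ → ℝ
  | 0 => 0
  | k + 1 => sInf {z : ℝ | besselJZero ν k < z ∧ besselJ ν z = 0}

namespace BesselAux

open Set

noncomputable def c (ν : ℝ) (k : ℕ) : ℝ :=
  (-1) ^ k / (Nat.factorial k * Real.Gamma (k + ν + 1) * 4 ^ k)

noncomputable def D (c : ℕ → ℝ) (k : ℕ) : ℝ := (k + 1) * c (k + 1)

noncomputable def H (c : ℕ → ℝ) (y : ℝ) : ℝ := ∑' k : ℕ, c k * y ^ k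

def Bnd (c : ℕ → ℝ) (A : ℝ) : Prop :=
  ∀ k : ℕ, |c k| ≤ A / (Nat.factorial k * Nat.factorial k)

noncomputable def Uf (ν : ℝ) (x : ℝ) : ℝ :=
  (2:ℝ) ^ (-ν) * (x ^ (ν + 1/2) * H (c ν) (x ^ 2))

noncomputable def U1 (ν : ℝ) (x : ℝ) : ℝ :=
  (2:ℝ) ^ (-ν) * ((ν + 1/2) * x ^ (ν - 1/2) * H (c ν) (x ^ 2)
    + 2 * x ^ (ν + 3/2) * H (D (c ν)) (x ^ 2))

lemma Bnd.nonneg {c : ℕ → ℝ} {A : ℝ} (h : Bnd c A) : 0 ≤ A := by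
  have h0 := h 0
  have := abs_nonneg (c 0)
  simp [Nat.factorial] at h0
  linarith

lemma Bnd.le' {c : ℕ → ℝ} {A : ℝ} (h : Bnd c A) (k : ℕ) :
    |c k| ≤ A / Nat.factorial k := by
  refine (h k).trans ?_
  have h1 : (1:ℝ) ≤ Nat.factorial k := by exact_mod_cast Nat.one_le_iff_ne_zero.2 k.factorial_ne_zero
  rw [div_le_div_iff₀ (by positivity) (by positivity)]
  have hfk : (0:ℝ) < Nat.factorial k := by positivity
  nlinarith [mul_nonneg (mul_nonneg h.nonneg hfk.le) (sub_nonneg.2 h1)]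

lemma Bnd.D {c : ℕ → ℝ} {A : ℝ} (h : Bnd c A) : Bnd (BesselAux.D c) A := by
  intro k
  have h1 := h (k + 1)
  have hfk : (0:ℝ) < Nat.factorial k := by positivity
  have hfk1 : (0:ℝ) < Nat.factorial (k+1) := by positivity
  have hle : (Nat.factorial k : ℝ) ≤ Nat.factorial (k+1) := by
    exact_mod_cast Nat.factorial_le (Nat.le_succ k)
  have habs : |BesselAux.D c k| = (k+1) * |c (k+1)| := by
    rw [BesselAux.D, abs_mul]
    congr 1
    rw [abs_of_nonneg]; positivity
  rw [habs]
  calc (k+1 : ℝ) * |c (k+1)| ≤ (k+1) * (A / (Nat.factorial (k+1) * Nat.factorial (k+1))) := by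
        apply mul_le_mul_of_nonneg_left h1; positivity
    _ = A / (Nat.factorial k * Nat.factorial (k+1)) := by
        rw [Nat.factorial_succ]; push_cast; field_simp
    _ ≤ A / (Nat.factorial k * Nat.factorial k) := by
        apply div_le_div_of_nonneg_left h.nonneg (by positivity)
        exact mul_le_mul_of_nonneg_left hle hfk.le

lemma summable_pow_fact (A r : ℝ) : Summable fun k : ℕ => A * (r ^ k / Nat.factorial k) :=
  (Real.summable_pow_div_factorial r).mul_left A

lemma Bnd.summable {c : ℕ → ℝ} {A : ℝ} (h : Bnd c A) (y : ℝ) :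
    Summable fun k => c k * y ^ k := by
  apply Summable.of_norm_bounded (summable_pow_fact A (|y|))
  intro k
  rw [Real.norm_eq_abs, abs_mul, abs_pow]
  calc |c k| * |y| ^ k ≤ A / Nat.factorial k * |y| ^ k := by
        apply mul_le_mul_of_nonneg_right (h.le' k); positivity
    _ = A * (|y| ^ k / Nat.factorial k) := by ring

/-- derivative bound for the smooth-series lemma: `‖k * c k * y^(k-1)‖ ≤ u k` on `|y| < R`. -/
lemma Bnd.summable_deriv_bound {c : ℕ → ℝ} {A : ℝ} (h : Bnd c A) (R : ℝ) (hR : 0 ≤ R) :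
    Summable fun k : ℕ => A * ((2 * (R + 1)) ^ k / Nat.factorial k) :=
  summable_pow_fact _ _

lemma deriv_term_bound {c : ℕ → ℝ} {A : ℝ} (h : Bnd c A) {R : ℝ} (hR : 0 ≤ R)
    (k : ℕ) {y : ℝ} (hy : |y| ≤ R) :
    ‖(k : ℝ) * c k * y ^ (k - 1)‖ ≤ A * ((2 * (R + 1)) ^ k / Nat.factorial k) := by
  have hyR : |y| ^ (k-1) ≤ (R+1) ^ k := by
    calc |y| ^ (k-1) ≤ (R+1) ^ (k-1) := by
          apply pow_le_pow_left₀ (abs_nonneg _) (by linarith)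
      _ ≤ (R+1) ^ k := by
          apply pow_le_pow_right₀ (by linarith) (Nat.sub_le k 1)
  have hk2 : (k : ℝ) ≤ 2 ^ k := by exact_mod_cast (Nat.lt_two_pow_self (n := k)).le
  rw [Real.norm_eq_abs, abs_mul, abs_mul, abs_pow]
  have h1 : |(k:ℝ)| = (k:ℝ) := abs_of_nonneg (Nat.cast_nonneg k)
  rw [h1]
  calc (k:ℝ) * |c k| * |y| ^ (k-1)
      ≤ 2 ^ k * (A / Nat.factorial k) * (R+1) ^ k := by
        have hA := h.nonneg
        apply mul_le_mul
        · apply mul_le_mul hk2 (h.le' k) (abs_nonneg _) (by positivity)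
        · exact hyR
        · positivity
        · positivity
    _ = A * ((2 * (R + 1)) ^ k / Nat.factorial k) := by
        rw [mul_pow]; field_simp

lemma hasDerivAt_H {c : ℕ → ℝ} {A : ℝ} (h : Bnd c A) (y : ℝ) :
    HasDerivAt (H c) (H (D c) y) y := by
  have hD := h.D
  set R := |y| + 1 with hRdef
  have hR0 : (0:ℝ) ≤ R := by positivity
  have hderiv : HasDerivAt (H c) (∑' k : ℕ, (k : ℝ) * c k * y ^ (k - 1)) y := by
    refine hasDerivAt_tsum_of_isPreconnected
      (h.summable_deriv_bound R hR0) (Metric.isOpen_ball (x := (0:ℝ)) (ε := R))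
      (convex_ball (0:ℝ) R).isPreconnected
      (g := fun k z => c k * z ^ k) (g' := fun k z => (k : ℝ) * c k * z ^ (k-1))
      (y₀ := y) ?_ ?_ ?_ ?_ ?_
    · intro n z hz
      simpa [mul_comm, mul_assoc, mul_left_comm] using ((hasDerivAt_pow n z).const_mul (c n))
    · intro n z hz
      simp only [Metric.mem_ball, Real.dist_eq, sub_zero] at hz
      exact deriv_term_bound h hR0 n hz.le
    · simp only [Metric.mem_ball, Real.dist_eq, sub_zero, hRdef]
      linarith
    · exact h.summable y
    · simp only [Metric.mem_ball, Real.dist_eq, sub_zero, hRdef]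
      linarith
  convert hderiv using 1
  have hs : Summable fun k : ℕ => (k : ℝ) * c k * y ^ (k - 1) := by
    apply Summable.of_norm_bounded (h.summable_deriv_bound R hR0)
    intro k
    exact deriv_term_bound h hR0 k (by rw [hRdef]; linarith)
  rw [H, Summable.tsum_eq_zero_add hs]
  simp only [Nat.cast_zero, zero_mul, Nat.cast_add, Nat.cast_one, Nat.add_sub_cancel, zero_add]
  apply tsum_congr
  intro k
  rw [D]

lemma continuous_H {c : ℕ → ℝ} {A : ℝ} (h : Bnd c A) : Continuous (H c) :=
  continuous_iff_continuousAt.2 fun y => (hasDerivAt_H h y).continuousAt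


section
variable {ν : ℝ} (hν : 0 ≤ ν)

include hν in
lemma gamma_pos (k : ℕ) : 0 < Real.Gamma ((k : ℝ) + ν + 1) :=
  Real.Gamma_pos_of_pos (by positivity)

include hν in
lemma gamma_fact_le (k : ℕ) :
    Real.Gamma (ν + 1) * Nat.factorial k ≤ Real.Gamma ((k : ℝ) + ν + 1) := by
  induction k with
  | zero => simp
  | succ n ih =>
    have h1 : ((n+1 : ℕ) : ℝ) + ν + 1 = ((n:ℝ) + ν + 1) + 1 := by push_cast; ring
    have hG : Real.Gamma (((n+1:ℕ):ℝ) + ν + 1) = ((n:ℝ)+ν+1) * Real.Gamma ((n:ℝ)+ν+1) := by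
      rw [h1, Real.Gamma_add_one (by positivity : (0:ℝ) < (n:ℝ)+ν+1).ne']
    have h2 : (Nat.factorial (n+1) : ℝ) = ((n:ℝ)+1) * Nat.factorial n := by
      rw [Nat.factorial_succ]; push_cast; ring
    rw [hG, h2]
    have hg := gamma_pos hν (k := n)
    have hgp : 0 < Real.Gamma (ν + 1) := Real.Gamma_pos_of_pos (by positivity)
    have hfn : (0:ℝ) < Nat.factorial n := by positivity
    have step1 : ((n:ℝ)+1) * (Real.Gamma (ν+1) * Nat.factorial n)
        ≤ ((n:ℝ)+1) * Real.Gamma ((n:ℝ)+ν+1) :=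
      mul_le_mul_of_nonneg_left ih (by positivity)
    have step2 : ((n:ℝ)+1) * Real.Gamma ((n:ℝ)+ν+1)
        ≤ ((n:ℝ)+ν+1) * Real.Gamma ((n:ℝ)+ν+1) :=
      mul_le_mul_of_nonneg_right (by linarith) hg.le
    nlinarith [step1, step2]

include hν in
lemma c_bnd : Bnd (c ν) (1 / Real.Gamma (ν + 1)) := by
  intro k
  have hg := gamma_pos hν (k := k)
  have hgp : 0 < Real.Gamma (ν + 1) := Real.Gamma_pos_of_pos (by positivity)
  have hfk : (0:ℝ) < Nat.factorial k := by positivity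
  have h4 : (1:ℝ) ≤ 4 ^ k := one_le_pow₀ (by norm_num)
  have habs : |c ν k| = 1 / (Nat.factorial k * Real.Gamma ((k:ℝ) + ν + 1) * 4 ^ k) := by
    rw [c, abs_div, abs_pow, abs_neg, abs_one, one_pow]
    congr 1
    rw [abs_of_pos]; positivity
  rw [habs, div_le_div_iff₀ (by positivity) (by positivity)]
  have hkey := gamma_fact_le hν k
  have h4' : (0:ℝ) < 4 ^ k := by positivity
  rw [div_mul_eq_mul_div, one_mul, one_mul, le_div_iff₀ hgp]
  have hint1 : Real.Gamma (ν+1) * Nat.factorial k * Nat.factorial k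
      ≤ Real.Gamma ((k:ℝ)+ν+1) * Nat.factorial k :=
    mul_le_mul_of_nonneg_right hkey hfk.le
  have hint2 : Real.Gamma ((k:ℝ)+ν+1) * Nat.factorial k * 1
      ≤ Real.Gamma ((k:ℝ)+ν+1) * Nat.factorial k * 4 ^ k :=
    mul_le_mul_of_nonneg_left h4 (by positivity)
  nlinarith [hint1, hint2]

include hν in
lemma c_rec (k : ℕ) : c ν k + 4 * (k + 1) * ((k:ℝ) + ν + 1) * c ν (k + 1) = 0 := by
  have hg := gamma_pos hν k
  have hfk : (0:ℝ) < Nat.factorial k := by positivity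
  have h4 : (0:ℝ) < 4 ^ k := by positivity
  have hkν : ((k:ℝ) + ν + 1) ≠ 0 := by positivity
  have hGsucc : Real.Gamma (((k+1:ℕ):ℝ) + ν + 1) = ((k:ℝ)+ν+1) * Real.Gamma ((k:ℝ)+ν+1) := by
    have h1 : ((k+1 : ℕ) : ℝ) + ν + 1 = ((k:ℝ) + ν + 1) + 1 := by push_cast; ring
    rw [h1, Real.Gamma_add_one hkν]
  have hfsucc : (Nat.factorial (k+1) : ℝ) = ((k:ℝ)+1) * Nat.factorial k := by
    rw [Nat.factorial_succ]; push_cast; ring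
  rw [c, c, hGsucc, hfsucc, pow_succ, pow_succ]
  field_simp
  ring

include hν in
lemma series_ODE (y : ℝ) :
    H (c ν) y + 4 * (ν + 1) * H (D (c ν)) y + 4 * y * H (D (D (c ν))) y = 0 := by
  have hb := c_bnd hν
  have S0 := hb.summable y
  have S1 := hb.D.summable y
  have S2 := hb.D.D.summable y
  have key : H (c ν) y + 4 * (ν + 1) * H (D (c ν)) y = -(4 * y) * H (D (D (c ν))) y := by
    have e1 : H (c ν) y + 4 * (ν + 1) * H (D (c ν)) y
        = ∑' k : ℕ, (c ν k * y ^ k + 4 * (ν + 1) * (D (c ν) k * y ^ k)) := by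
      rw [H, H, ← tsum_mul_left, Summable.tsum_add S0 (S1.mul_left _)]
    have e2 : ∀ k : ℕ, c ν k * y ^ k + 4 * (ν + 1) * (D (c ν) k * y ^ k)
        = -(4 * (k:ℝ) * ((k:ℝ)+1) * c ν (k+1)) * y ^ k := by
      intro k
      have := c_rec hν k
      have hD : D (c ν) k = ((k:ℝ)+1) * c ν (k+1) := rfl
      rw [hD]; linear_combination (y ^ k) * this
    have S3 : Summable fun k : ℕ => -(4 * (k:ℝ) * ((k:ℝ)+1) * c ν (k+1)) * y ^ k := by
      apply (summable_congr ?_).1 (S0.add (S1.mul_left (4 * (ν+1))))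
      intro k
      exact e2 k
    rw [e1, tsum_congr e2, Summable.tsum_eq_zero_add S3]
    simp only [Nat.cast_zero, Nat.cast_add, Nat.cast_one, pow_zero]
    have e3 : ∀ k : ℕ, -(4 * ((k:ℝ)+1) * (((k:ℝ)+1)+1) * c ν (k+1+1)) * y ^ (k+1)
        = -(4*y) * (D (D (c ν)) k * y ^ k) := by
      intro k
      have hDD : D (D (c ν)) k = ((k:ℝ)+1) * (((k:ℝ)+1)+1) * c ν (k+1+1) := by
        rw [D, D]; push_cast; ring
      rw [hDD, pow_succ]; ring
    rw [tsum_congr e3, tsum_mul_left]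
    rw [H]
    ring
  linarith [key]

end

section
variable {ν : ℝ} (hν : 0 ≤ ν)

include hν in
lemma besselJ_eq {z : ℝ} (hz : 0 < z) :
    besselJ ν z = (z / 2) ^ ν * H (c ν) (z ^ 2) := by
  have h2 : (0:ℝ) < z / 2 := by linarith
  rw [besselJ, H, ← tsum_mul_left]
  apply tsum_congr
  intro k
  have hcast : 2 * (k : ℝ) + ν = ((2 * k : ℕ) : ℝ) + ν := by push_cast; ring
  rw [hcast, Real.rpow_add h2, Real.rpow_natCast]
  have hpow : (z / 2) ^ (2 * k) = (z ^ 2) ^ k / 4 ^ k := by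
    rw [pow_mul, show (z/2)^2 = z^2/4 by ring, div_pow]
  rw [hpow, c]
  have hg := (gamma_pos hν k).ne'
  have hf : (Nat.factorial k : ℝ) ≠ 0 := by positivity
  have h4 : ((4:ℝ)) ^ k ≠ 0 := by positivity
  field_simp


include hν in
lemma besselJ_zero_iff {z : ℝ} (hz : 0 < z) :
    besselJ ν z = 0 ↔ H (c ν) (z ^ 2) = 0 := by
  rw [besselJ_eq hν hz]
  have : (z / 2) ^ ν ≠ 0 := by
    have : (0:ℝ) < (z/2) ^ ν := Real.rpow_pos_of_pos (by linarith) ν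
    exact this.ne'
  simp only [mul_eq_zero, this, false_or]

lemma Uf_zero_iff {z : ℝ} (hz : 0 < z) :
    Uf ν z = 0 ↔ H (c ν) (z ^ 2) = 0 := by
  rw [Uf]
  have h1 : ((2:ℝ)) ^ (-ν) ≠ 0 := (Real.rpow_pos_of_pos (by norm_num) _).ne'
  have h2 : z ^ (ν + 1/2) ≠ 0 := (Real.rpow_pos_of_pos hz _).ne'
  simp only [mul_eq_zero, h1, h2, false_or]

include hν in
lemma besselJ_zero_iff_Uf {z : ℝ} (hz : 0 < z) :
    besselJ ν z = 0 ↔ Uf ν z = 0 := by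
  rw [besselJ_zero_iff hν hz, Uf_zero_iff hz]

lemma hasDerivAt_sq (x : ℝ) : HasDerivAt (fun x : ℝ => x ^ 2) (2 * x) x := by
  simpa using hasDerivAt_pow 2 x

include hν in
lemma hasDerivAt_Uf {x : ℝ} (hx : 0 < x) : HasDerivAt (Uf ν) (U1 ν x) x := by
  have hb := c_bnd hν
  have hG : HasDerivAt (fun x : ℝ => H (c ν) (x ^ 2)) (H (D (c ν)) (x ^ 2) * (2 * x)) x :=
    (hasDerivAt_H hb (x ^ 2)).comp (h := fun x : ℝ => x ^ 2) x (hasDerivAt_sq x)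
  have hr : HasDerivAt (fun x : ℝ => x ^ (ν + 1/2)) ((ν + 1/2) * x ^ (ν - 1/2)) x := by
    have h := Real.hasDerivAt_rpow_const (x := x) (p := ν + 1/2) (Or.inl hx.ne')
    convert h using 2
    ring_nf
  have hmain := (hr.mul hG).const_mul ((2:ℝ) ^ (-ν))
  refine hmain.congr_deriv ?_
  rw [U1]
  have e3 : x ^ (ν + 3/2) = x ^ (ν + 1/2) * x := by
    rw [← Real.rpow_add_one hx.ne']; ring_nf
  rw [e3]
  ring

include hν in
lemma hasDerivAt_U1 {x : ℝ} (hx : 0 < x) :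
    HasDerivAt (U1 ν) (-(1 - (ν ^ 2 - 1/4) / x ^ 2) * Uf ν x) x := by
  have hb := c_bnd hν
  have hG : HasDerivAt (fun x : ℝ => H (c ν) (x ^ 2)) (H (D (c ν)) (x ^ 2) * (2 * x)) x :=
    (hasDerivAt_H hb (x ^ 2)).comp (h := fun x : ℝ => x ^ 2) x (hasDerivAt_sq x)
  have hG1 : HasDerivAt (fun x : ℝ => H (D (c ν)) (x ^ 2))
      (H (D (D (c ν))) (x ^ 2) * (2 * x)) x :=
    (hasDerivAt_H hb.D (x ^ 2)).comp (h := fun x : ℝ => x ^ 2) x (hasDerivAt_sq x)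
  have hr1 : HasDerivAt (fun x : ℝ => x ^ (ν - 1/2)) ((ν - 1/2) * x ^ (ν - 3/2)) x := by
    have h := Real.hasDerivAt_rpow_const (x := x) (p := ν - 1/2) (Or.inl hx.ne')
    convert h using 2
    ring_nf
  have hr3 : HasDerivAt (fun x : ℝ => x ^ (ν + 3/2)) ((ν + 3/2) * x ^ (ν + 1/2)) x := by
    have h := Real.hasDerivAt_rpow_const (x := x) (p := ν + 3/2) (Or.inl hx.ne')
    convert h using 2
    ring_nf
  have hmain := (((hr1.mul hG).const_mul (ν + 1/2)).add
    ((hr3.mul hG1).const_mul 2)).const_mul ((2:ℝ) ^ (-ν))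
  have hU1 : U1 ν = fun x : ℝ => (2:ℝ) ^ (-ν) *
      ((ν + 1/2) * (x ^ (ν - 1/2) * H (c ν) (x ^ 2))
        + 2 * (x ^ (ν + 3/2) * H (D (c ν)) (x ^ 2))) := by
    funext t; rw [U1]; ring
  rw [hU1]
  refine hmain.congr_deriv ?_
  -- now an algebraic identity
  have hODE := series_ODE hν (x ^ 2)
  have hx2 : (x:ℝ) ^ 2 ≠ 0 := pow_ne_zero 2 hx.ne'
  have e1 : x ^ (ν + 1/2) = x ^ (ν - 3/2) * x ^ 2 := by
    rw [show ν + 1/2 = (ν - 3/2) + ((2:ℕ):ℝ) by push_cast; ring,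
      Real.rpow_add hx, Real.rpow_natCast]
  have e2 : x ^ (ν - 1/2) = x ^ (ν - 3/2) * x := by
    rw [show ν - 1/2 = (ν - 3/2) + 1 by ring, Real.rpow_add_one hx.ne']
  have e3 : x ^ (ν + 3/2) = x ^ (ν - 3/2) * x ^ 2 * x := by
    rw [show ν + 3/2 = (ν - 3/2) + ((3:ℕ):ℝ) by push_cast; ring,
      Real.rpow_add hx, Real.rpow_natCast]
    ring
  rw [Uf, e1, e2, e3]
  set t := x ^ (ν - 3/2) with ht
  set c2 := (2:ℝ) ^ (-ν) with hc2
  set g0 := H (c ν) (x ^ 2) with hg0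
  set g1 := H (D (c ν)) (x ^ 2) with hg1
  set g2 := H (D (D (c ν))) (x ^ 2) with hg2
  field_simp
  first
  | linear_combination (-(16 * c2 * t * x ^ 4)) * hODE
  | linear_combination (16 * c2 * t * x ^ 4) * hODE
  | linear_combination (c2 * t * x ^ 2 * x ^ 2) * hODE
  | linear_combination (-(c2 * t * x ^ 2 * x ^ 2)) * hODE
  | linear_combination (c2 * t * x ^ 2) * hODE
  | linear_combination (-(c2 * t * x ^ 2)) * hODE
  | linear_combination (c2 * t * x ^ 4 * x ^ 2) * hODE
  | linear_combination (-(c2 * t * x ^ 4 * x ^ 2)) * hODE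
  | linear_combination (c2 * t) * hODE
  | linear_combination (-(c2 * t)) * hODE
  | linear_combination (16 * c2 * t * x ^ 2) * hODE

end

/-! ### Sturm-type oscillation lemma -/

lemma sturm_aux (f f' q : ℝ → ℝ) (a b m : ℝ) (hm : 0 < m) (hab : b = a + Real.pi / m)
    (hf : ∀ x ∈ Icc a b, HasDerivAt f (f' x) x)
    (hf' : ∀ x ∈ Icc a b, HasDerivAt f' (-(q x) * f x) x)
    (hq : ∀ x ∈ Icc a b, m ^ 2 ≤ q x)
    (hpos : ∀ x ∈ Icc a b, 0 < f x) : False := by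
  have hπ : 0 < Real.pi := Real.pi_pos
  have haltb : a < b := by
    rw [hab]; have : 0 < Real.pi / m := by positivity
    linarith
  have hmb : m * (b - a) = Real.pi := by rw [hab]; field_simp; ring
  set W : ℝ → ℝ := fun x => f x * (m * Real.cos (m * (x - a))) - f' x * Real.sin (m * (x - a))
    with hW
  have hWd : ∀ x ∈ Icc a b,
      HasDerivAt W ((q x - m ^ 2) * (f x * Real.sin (m * (x - a)))) x := by
    intro x hx
    have hlin : HasDerivAt (fun x : ℝ => m * (x - a)) m x := by
      simpa using ((hasDerivAt_id x).sub_const a).const_mul m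
    have hsin : HasDerivAt (fun x : ℝ => Real.sin (m * (x - a)))
        (Real.cos (m * (x - a)) * m) x := (Real.hasDerivAt_sin _).comp x hlin
    have hcos : HasDerivAt (fun x : ℝ => Real.cos (m * (x - a)))
        (-Real.sin (m * (x - a)) * m) x := (Real.hasDerivAt_cos _).comp x hlin
    have hWd' := ((hf x hx).mul (hcos.const_mul m)).sub ((hf' x hx).mul hsin)
    refine hWd'.congr_deriv ?_
    ring
  have hmono : MonotoneOn W (Icc a b) := by
    apply monotoneOn_of_deriv_nonneg (convex_Icc a b)
    · intro x hx; exact (hWd x hx).continuousAt.continuousWithinAt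
    · intro x hx
      rw [interior_Icc] at hx
      exact ((hWd x (Ioo_subset_Icc_self hx)).differentiableAt).differentiableWithinAt
    · intro x hx
      rw [interior_Icc] at hx
      have hx' := Ioo_subset_Icc_self hx
      rw [(hWd x hx').deriv]
      have hsin_nonneg : 0 ≤ Real.sin (m * (x - a)) := by
        apply Real.sin_nonneg_of_nonneg_of_le_pi
        · nlinarith [hx.1]
        · nlinarith [hx.2]
      exact mul_nonneg (sub_nonneg.2 (hq x hx'))
        (mul_nonneg (hpos x hx').le hsin_nonneg)
  have hmemA : a ∈ Icc a b := ⟨le_refl a, haltb.le⟩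
  have hmemB : b ∈ Icc a b := ⟨haltb.le, le_refl b⟩
  have hWab : W a ≤ W b := hmono hmemA hmemB haltb.le
  have hWa : W a = m * f a := by
    simp [hW, mul_comm]
  have hWb : W b = -(m * f b) := by
    rw [hW]
    simp only [hmb]
    rw [Real.cos_pi, Real.sin_pi]
    ring
  have h1 := hpos a hmemA
  have h2 := hpos b hmemB
  rw [hWa, hWb] at hWab
  nlinarith

lemma same_sign {f : ℝ → ℝ} {a b : ℝ} (hab : a ≤ b) (hcont : ContinuousOn f (Icc a b))
    (h : ∀ z ∈ Icc a b, f z ≠ 0) (hfa : 0 < f a) : ∀ x ∈ Icc a b, 0 < f x := by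
  intro x hx
  rcases (h x hx).lt_or_gt with hneg | hp
  · exfalso
    have hsub : Icc a x ⊆ Icc a b := Icc_subset_Icc le_rfl hx.2
    have hiv := intermediate_value_Icc' hx.1 (hcont.mono hsub)
    have h0 : (0:ℝ) ∈ Icc (f x) (f a) := ⟨hneg.le, hfa.le⟩
    obtain ⟨z, hz, hz0⟩ := hiv h0
    exact h z (hsub hz) hz0
  · exact hp

lemma sturm (f f' q : ℝ → ℝ) (a b m : ℝ) (hm : 0 < m) (hab : b = a + Real.pi / m)
    (hf : ∀ x ∈ Icc a b, HasDerivAt f (f' x) x)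
    (hf' : ∀ x ∈ Icc a b, HasDerivAt f' (-(q x) * f x) x)
    (hq : ∀ x ∈ Icc a b, m ^ 2 ≤ q x) :
    ∃ z ∈ Icc a b, f z = 0 := by
  by_contra hcon
  push_neg at hcon
  have haltb : a < b := by
    have : 0 < Real.pi / m := by positivity
    rw [hab]; linarith [Real.pi_pos]
  have hcont : ContinuousOn f (Icc a b) := fun x hx =>
    (hf x hx).continuousAt.continuousWithinAt
  have hmemA : a ∈ Icc a b := ⟨le_refl a, haltb.le⟩
  rcases (hcon a hmemA).lt_or_gt with hfa | hfa
  · -- f a < 0 : apply to -f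
    have hpos : ∀ x ∈ Icc a b, 0 < (-f) x := by
      apply same_sign haltb.le hcont.neg
      · intro z hz; simpa using hcon z hz
      · simpa using hfa
    apply sturm_aux (-f) (fun x => -f' x) q a b m hm hab ?_ ?_ hq hpos
    · intro x hx; exact (hf x hx).neg
    · intro x hx
      show HasDerivAt (fun y => -f' y) (-q x * (-f) x) x
      have heq : -q x * (-f) x = -(-q x * f x) := by simp only [Pi.neg_apply]; ring
      rw [heq]
      exact (hf' x hx).neg
  · have hpos : ∀ x ∈ Icc a b, 0 < f x := same_sign haltb.le hcont hcon hfa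
    exact sturm_aux f f' q a b m hm hab hf hf' hq hpos

section
variable {ν : ℝ} (hν : 0 ≤ ν)

include hν in
lemma exists_besselJ_zero {a m : ℝ} (ha : 0 < a) (hm : 0 < m)
    (hq : ∀ x ∈ Icc a (a + Real.pi / m), m ^ 2 ≤ 1 - (ν ^ 2 - 1/4) / x ^ 2) :
    ∃ z ∈ Icc a (a + Real.pi / m), besselJ ν z = 0 := by
  have hsub : ∀ x ∈ Icc a (a + Real.pi / m), 0 < x := fun x hx => lt_of_lt_of_le ha hx.1
  obtain ⟨z, hz, hz0⟩ := sturm (Uf ν) (U1 ν) (fun x => 1 - (ν ^ 2 - 1/4) / x ^ 2)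
    a (a + Real.pi / m) m hm rfl
    (fun x hx => hasDerivAt_Uf hν (hsub x hx))
    (fun x hx => hasDerivAt_U1 hν (hsub x hx))
    hq
  exact ⟨z, hz, (besselJ_zero_iff_Uf hν (hsub z hz)).2 hz0⟩

include hν in
lemma continuous_Uf : Continuous (Uf ν) := by
  have hb := c_bnd hν
  apply continuous_const.mul
  apply Continuous.mul
  · rw [continuous_iff_continuousAt]
    intro x
    exact Real.continuousAt_rpow_const x (ν + 1/2) (Or.inr (by positivity))
  · exact (continuous_H hb).comp (continuous_pow 2)

include hν in
lemma H_c_zero_pos : 0 < H (c ν) 0 := by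
  have hb := c_bnd hν
  have : H (c ν) 0 = c ν 0 := by
    rw [H, tsum_eq_single 0]
    · simp
    · intro k hk
      simp [zero_pow hk]
  rw [this, c]
  have := gamma_pos hν 0
  simp only [Nat.cast_zero, zero_add] at this ⊢
  have h1 : (0:ℝ) < Real.Gamma (ν + 1) := by
    have : ((0:ℕ):ℝ) + ν + 1 = ν + 1 := by push_cast; ring
    simpa [this] using gamma_pos hν 0
  simp [Nat.factorial]
  positivity

include hν in
lemma Uf_pos_near_zero : ∃ δ > 0, ∀ x : ℝ, 0 < x → x ≤ δ → 0 < Uf ν x := by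
  have hb := c_bnd hν
  have hcont : ContinuousAt (H (c ν)) 0 := (continuous_H hb).continuousAt
  have hpos := H_c_zero_pos hν
  have hev : ∀ᶠ y in nhds (0:ℝ), 0 < H (c ν) y :=
    hcont.eventually (eventually_gt_nhds hpos)
  obtain ⟨ε, hε, hball⟩ := Metric.eventually_nhds_iff.1 hev
  refine ⟨Real.sqrt (ε / 2), by positivity, fun x hx hxδ => ?_⟩
  have hx2 : 0 < H (c ν) (x ^ 2) := by
    apply hball
    rw [Real.dist_eq, sub_zero]
    have h1 : x ^ 2 ≤ ε / 2 := by
      have := Real.sq_sqrt (by positivity : (0:ℝ) ≤ ε / 2)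
      nlinarith [hx.le, hxδ]
    rw [abs_of_nonneg (by positivity : (0:ℝ) ≤ x ^ 2)]
    linarith
  rw [Uf]
  have h2 : (0:ℝ) < (2:ℝ) ^ (-ν) := Real.rpow_pos_of_pos (by norm_num) _
  have h3 : (0:ℝ) < x ^ (ν + 1/2) := Real.rpow_pos_of_pos hx _
  positivity

include hν in
lemma Uf_zero : Uf ν 0 = 0 := by
  have hne : ν + 1/2 ≠ 0 := by positivity
  rw [Uf, Real.zero_rpow hne]
  ring

include hν in
lemma no_small_zero {z : ℝ} (hz : 0 < z) (hzero : besselJ ν z = 0) :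
    ν ^ 2 - 1/4 ≤ z ^ 2 := by
  by_contra hlt
  push_neg at hlt
  have hUz : Uf ν z = 0 := (besselJ_zero_iff_Uf hν hz).1 hzero
  obtain ⟨δ, hδ, hδpos⟩ := Uf_pos_near_zero hν
  have hδz : δ < z := by
    by_contra hc
    push_neg at hc
    exact absurd hUz (hδpos z hz hc).ne'
  -- first zero above δ
  set P : Set ℝ := Icc δ z ∩ {x | Uf ν x = 0} with hP
  have hPclosed : IsClosed P :=
    isClosed_Icc.inter (isClosed_eq (continuous_Uf hν) continuous_const)
  have hPz : z ∈ P := ⟨⟨hδz.le, le_refl z⟩, hUz⟩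
  have hPbdd : BddBelow P := ⟨δ, fun x hx => hx.1.1⟩
  set z₀ := sInf P with hz₀
  have hz₀mem : z₀ ∈ P := hPclosed.csInf_mem ⟨z, hPz⟩ hPbdd
  have hz₀pos : 0 < z₀ := lt_of_lt_of_le hδ hz₀mem.1.1
  have hz₀z : z₀ ≤ z := hz₀mem.1.2
  have hz₀zero : Uf ν z₀ = 0 := hz₀mem.2
  have hmin : ∀ x, 0 < x → x < z₀ → Uf ν x ≠ 0 := by
    intro x hx0 hxz₀ hx0'
    rcases le_or_gt x δ with hxδ | hxδ
    · exact absurd hx0' (hδpos x hx0 hxδ).ne'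
    · have : x ∈ P := ⟨⟨hxδ.le, le_trans hxz₀.le hz₀z⟩, hx0'⟩
      exact absurd (csInf_le hPbdd this) (not_le.2 hxz₀)
  have hposon : ∀ x, 0 < x → x < z₀ → 0 < Uf ν x := by
    intro x hx0 hxz₀
    rcases (hmin x hx0 hxz₀).lt_or_gt with hneg | hp
    · exfalso
      rcases le_or_gt x δ with hxδ | hxδ
      · exact absurd hneg (not_lt.2 (hδpos x hx0 hxδ).le)
      · -- IVT between δ and x
        have hcont : ContinuousOn (Uf ν) (Icc δ x) := (continuous_Uf hν).continuousOn
        have hiv := intermediate_value_Icc' hxδ.le hcont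
        have h0 : (0:ℝ) ∈ Icc (Uf ν x) (Uf ν δ) := ⟨hneg.le, (hδpos δ hδ le_rfl).le⟩
        obtain ⟨y, hy, hy0⟩ := hiv h0
        have hy0' : 0 < y := lt_of_lt_of_le hδ hy.1
        have hyz₀ : y < z₀ := lt_of_le_of_lt hy.2 hxz₀
        exact hmin y hy0' hyz₀ hy0
    · exact hp
  -- MVT to find ξ with U1 ξ < 0
  set x₁ := z₀ / 2 with hx₁
  have hx₁pos : 0 < x₁ := by positivity
  have hx₁lt : x₁ < z₀ := by rw [hx₁]; linarith
  have hcont1 : ContinuousOn (Uf ν) (Icc x₁ z₀) := (continuous_Uf hν).continuousOn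
  obtain ⟨ξ, hξ, hξslope⟩ := exists_hasDerivAt_eq_slope (Uf ν) (U1 ν) hx₁lt hcont1
    (fun x hx => hasDerivAt_Uf hν (lt_trans hx₁pos hx.1))
  have hξpos : 0 < ξ := lt_trans hx₁pos hξ.1
  have hUξpos : 0 < Uf ν ξ := hposon ξ hξpos hξ.2
  have hU1ξ : U1 ν ξ < 0 := by
    rw [hξslope, hz₀zero]
    have h1 : 0 < Uf ν x₁ := hposon x₁ hx₁pos hx₁lt
    apply div_neg_of_neg_of_pos <;> linarith
  -- pick small s with Uf s < Uf ξ
  have htend : ContinuousAt (Uf ν) 0 := (continuous_Uf hν).continuousAt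
  have hev : ∀ᶠ x in nhds (0:ℝ), Uf ν x < Uf ν ξ := by
    have h0 : Uf ν 0 < Uf ν ξ := by rw [Uf_zero hν]; exact hUξpos
    exact htend.eventually_lt continuousAt_const h0
  have hev2 : ∀ᶠ x in nhdsWithin (0:ℝ) (Ioi 0), Uf ν x < Uf ν ξ ∧ x < ξ := by
    apply Eventually.and
    · exact nhdsWithin_le_nhds hev
    · exact eventually_nhdsWithin_of_eventually_nhds (eventually_lt_nhds hξpos)
  obtain ⟨s, hs⟩ := (hev2.and self_mem_nhdsWithin).exists
  obtain ⟨⟨hsU, hsξ⟩, hs0⟩ := hs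
  -- U1 is monotone on [s, z₀]
  have hmono : MonotoneOn (U1 ν) (Icc s z₀) := by
    apply monotoneOn_of_deriv_nonneg (convex_Icc s z₀)
    · intro x hx
      exact (hasDerivAt_U1 hν (lt_of_lt_of_le hs0 hx.1)).continuousAt.continuousWithinAt
    · intro x hx
      rw [interior_Icc] at hx
      exact (hasDerivAt_U1 hν (lt_trans hs0 hx.1)).differentiableAt.differentiableWithinAt
    · intro x hx
      rw [interior_Icc] at hx
      have hx0 : 0 < x := lt_trans hs0 hx.1
      rw [(hasDerivAt_U1 hν hx0).deriv]
      have hxz : x < z₀ := hx.2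
      have hU : 0 ≤ Uf ν x := (hposon x hx0 hxz).le
      have hxlez : x ^ 2 < ν ^ 2 - 1/4 := by nlinarith [hz₀z]
      have hfac : 0 ≤ -(1 - (ν ^ 2 - 1/4) / x ^ 2) := by
        have h2 : (0:ℝ) < x ^ 2 := by positivity
        have : 1 ≤ (ν ^ 2 - 1/4) / x ^ 2 := by
          rw [le_div_iff₀ h2]; linarith
        linarith
      exact mul_nonneg hfac hU
  -- MVT on [s, ξ]
  have hsξ' : s < ξ := hsξ
  have hcont2 : ContinuousOn (Uf ν) (Icc s ξ) := (continuous_Uf hν).continuousOn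
  obtain ⟨η, hη, hηslope⟩ := exists_hasDerivAt_eq_slope (Uf ν) (U1 ν) hsξ' hcont2
    (fun x hx => hasDerivAt_Uf hν (lt_trans hs0 hx.1))
  have hU1η : 0 < U1 ν η := by
    rw [hηslope]
    apply div_pos <;> linarith [hξ.2]
  have hmono' : U1 ν η ≤ U1 ν ξ := by
    apply hmono
    · exact ⟨hη.1.le, le_trans hη.2.le hξ.2.le⟩
    · exact ⟨hsξ'.le, hξ.2.le⟩
    · exact hη.2.le
  linarith

include hν in
lemma zero_lower_bound {z : ℝ} (hz : 0 < z) (hzero : besselJ ν z = 0) :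
    Real.sqrt (max (ν ^ 2 - 1/4) 0) ≤ z := by
  have h1 := no_small_zero hν hz hzero
  have h2 : max (ν ^ 2 - 1/4) 0 ≤ z ^ 2 := by
    apply max_le h1 (by positivity)
  calc Real.sqrt (max (ν ^ 2 - 1/4) 0) ≤ Real.sqrt (z ^ 2) := Real.sqrt_le_sqrt h2
    _ = z := by rw [Real.sqrt_sq hz.le]
end

set_option maxHeartbeats 1000000 in
lemma besselJZero_succ (ν : ℝ) (k : ℕ) :
    besselJZero ν (k + 1) = sInf {z : ℝ | besselJZero ν k < z ∧ besselJ ν z = 0} := rfl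

lemma besselJZero_nonneg (ν : ℝ) : ∀ k, 0 ≤ besselJZero ν k
  | 0 => le_refl 0
  | (k+1) => Real.sInf_nonneg (fun x hx => le_trans (besselJZero_nonneg ν k) hx.1.le)


end BesselAux

set_option maxHeartbeats 2000000 in
/-- If `(ν_i, k_i)` is a sequence with `ν_i ≥ 0`, `k_i ≥ 1` and
`j_{ν_i, k_i} → ∞`, then `j_{ν_i, k_i + 1} / j_{ν_i, k_i} → 1`. -/
theorem besselZero_ratio_tendsto_one (ν : ℕ → ℝ) (k : ℕ → ℕ)
    (hν : ∀ i, 0 ≤ ν i) (hk : ∀ i, 1 ≤ k i)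
    (htop : Tendsto (fun i => besselJZero (ν i) (k i)) atTop atTop) :
    Tendsto (fun i => besselJZero (ν i) (k i + 1) / besselJZero (ν i) (k i))
      atTop (nhds 1) := by
  rw [Metric.tendsto_atTop]
  intro ε hε
  set ε' := min (ε / 3) 1 with hε'def
  have hε'pos : 0 < ε' := lt_min (by linarith) one_pos
  have hε'le1 : ε' ≤ 1 := min_le_right _ _
  have hε'leε : ε' ≤ ε / 3 := min_le_left _ _
  set m := Real.sqrt (ε' / 2) with hmdef
  have hmpos : 0 < m := Real.sqrt_pos.2 (by linarith)
  have hm2 : m ^ 2 = ε' / 2 := Real.sq_sqrt (by linarith)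
  set T := max 1 (Real.pi / (m * ε')) with hTdef
  obtain ⟨N, hN⟩ := eventually_atTop.1 (htop.eventually_ge_atTop T)
  refine ⟨N, fun i hi => ?_⟩
  have hjT : T ≤ besselJZero (ν i) (k i) := hN i hi
  set j := besselJZero (ν i) (k i) with hjdef
  have hj1 : (1:ℝ) ≤ j := le_trans (le_max_left _ _) hjT
  have hjpos : 0 < j := by linarith
  -- j is the infimum of a set of genuine positive zeros
  obtain ⟨n, hn⟩ : ∃ n, k i = n + 1 := ⟨k i - 1, (Nat.succ_pred_eq_of_pos (hk i)).symm⟩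
  have hprev : 0 ≤ besselJZero (ν i) n := BesselAux.besselJZero_nonneg _ n
  have hjeq : j = sInf {z : ℝ | besselJZero (ν i) n < z ∧ besselJ (ν i) z = 0} := by
    rw [hjdef, hn, BesselAux.besselJZero_succ]
  have hS'ne : {z : ℝ | besselJZero (ν i) n < z ∧ besselJ (ν i) z = 0}.Nonempty := by
    by_contra hc
    rw [Set.not_nonempty_iff_eq_empty] at hc
    rw [hjeq, hc, Real.sInf_empty] at hjpos
    exact lt_irrefl 0 hjpos
  have hjlb : Real.sqrt (max ((ν i) ^ 2 - 1/4) 0) ≤ j := by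
    rw [hjeq]
    apply le_csInf hS'ne
    intro w hw
    exact BesselAux.zero_lower_bound (hν i) (lt_of_le_of_lt hprev hw.1) hw.2
  have hM : (ν i) ^ 2 - 1/4 ≤ j ^ 2 := by
    have h1 : (0:ℝ) ≤ max ((ν i) ^ 2 - 1/4) 0 := le_max_right _ _
    nlinarith [Real.sq_sqrt h1, Real.sqrt_nonneg (max ((ν i) ^ 2 - 1/4) 0),
      le_max_left ((ν i) ^ 2 - 1/4) (0:ℝ)]
  -- Sturm comparison on [a, a + π/m] with a = j(1+ε')
  set a := j * (1 + ε') with hadef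
  have hapos : 0 < a := by nlinarith
  have hja : j < a := by nlinarith
  have hq : ∀ x ∈ Set.Icc a (a + Real.pi / m), m ^ 2 ≤ 1 - ((ν i) ^ 2 - 1/4) / x ^ 2 := by
    intro x hx
    have hxa : a ≤ x := hx.1
    have hxpos : 0 < x := lt_of_lt_of_le hapos hxa
    have hx2 : (0:ℝ) < x ^ 2 := by positivity
    have ha2 : (0:ℝ) < a ^ 2 := by positivity
    rw [hm2]
    have hd : ((ν i) ^ 2 - 1/4) / x ^ 2 ≤ j ^ 2 / a ^ 2 := by
      rcases le_or_gt ((ν i) ^ 2 - 1/4) 0 with hneg | hpos2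
      · exact le_trans (div_nonpos_of_nonpos_of_nonneg hneg hx2.le) (by positivity)
      · rw [div_le_div_iff₀ hx2 ha2]
        have haxa : a ^ 2 ≤ x ^ 2 := by nlinarith
        calc ((ν i) ^ 2 - 1/4) * a ^ 2 ≤ j ^ 2 * a ^ 2 :=
              mul_le_mul_of_nonneg_right hM (sq_nonneg a)
          _ ≤ j ^ 2 * x ^ 2 := mul_le_mul_of_nonneg_left haxa (sq_nonneg j)
    have hfin : j ^ 2 / a ^ 2 ≤ 1 - ε' / 2 := by
      rw [hadef, mul_pow, div_le_iff₀ (by positivity)]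
      have hkey : (1:ℝ) ≤ (1 - ε' / 2) * ((1 + ε') ^ 2) := by nlinarith [sq_nonneg ε']
      calc j ^ 2 = 1 * j ^ 2 := by ring
        _ ≤ ((1 - ε' / 2) * ((1 + ε') ^ 2)) * j ^ 2 :=
            mul_le_mul_of_nonneg_right hkey (sq_nonneg j)
        _ = (1 - ε' / 2) * (j ^ 2 * (1 + ε') ^ 2) := by ring
    linarith
  obtain ⟨w, hw, hw0⟩ := BesselAux.exists_besselJ_zero (hν i) hapos hmpos hq
  have hwa : a ≤ w := hw.1
  have hwj : j < w := lt_of_lt_of_le hja hwa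
  have hnext : besselJZero (ν i) (k i + 1) = sInf {z : ℝ | j < z ∧ besselJ (ν i) z = 0} := by
    rw [BesselAux.besselJZero_succ, ← hjdef]
  have hS''bdd : BddBelow {z : ℝ | j < z ∧ besselJ (ν i) z = 0} :=
    ⟨j, fun y hy => hy.1.le⟩
  have hub : besselJZero (ν i) (k i + 1) ≤ w := by
    rw [hnext]
    exact csInf_le hS''bdd ⟨hwj, hw0⟩
  have hlb2 : j ≤ besselJZero (ν i) (k i + 1) := by
    rw [hnext]
    exact le_csInf ⟨w, hwj, hw0⟩ (fun y hy => hy.1.le)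
  have hπm : Real.pi / m ≤ ε' * j := by
    have h2 : Real.pi / (m * ε') ≤ j := le_trans (le_max_right _ _) hjT
    rw [div_le_iff₀ (mul_pos hmpos hε'pos)] at h2
    rw [div_le_iff₀ hmpos]
    nlinarith
  have hwbound : w ≤ a + Real.pi / m := hw.2
  have hub2 : besselJZero (ν i) (k i + 1) ≤ (1 + 2 * ε') * j := by
    calc besselJZero (ν i) (k i + 1) ≤ w := hub
      _ ≤ a + Real.pi / m := hwbound
      _ ≤ j * (1 + ε') + ε' * j := by linarith
      _ = (1 + 2 * ε') * j := by ring
  have hratio_ub : besselJZero (ν i) (k i + 1) / j ≤ 1 + 2 * ε' := by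
    rw [div_le_iff₀ hjpos]
    linarith
  have hratio_lb : 1 ≤ besselJZero (ν i) (k i + 1) / j := (one_le_div hjpos).2 hlb2
  rw [Real.dist_eq, abs_of_nonneg (by linarith)]
  have : 2 * ε' ≤ 2 * ε / 3 := by linarith
  linarith
end
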